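/- Let G be a graph on vertices v_1,...,v_n and suppose the vertices v_1,...,v_r (r ≥ 2) all have the same closed neighborhood in G. Let G^σ be the signed graph obtained from G by switching about the set {v_1,...,v_t} for some t with 1 ≤ t ≤ r−1. Then the adjacency matrix A(G^σ) has at least r−1 linearly independent eigenvectors for the eigenvalue −1, each having nonzero entry sum; in particular −1 is a main eigenvalue of A(G^σ) of multiplicity at least r−1. Concretely, the r−1 vectors e_i + e_{t+1} (1 ≤ i ≤ t) and e_1 + e_{t+i} (2 ≤ i ≤ r−t) are linearly independent main eigenvectors of A(G^σ) for the eigenvalue −1, where e_j denotes the j-th standard basis vector of ℝ^n. -/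

import Mathlib

open Matrix

/-- The signed adjacency matrix obtained from the matrix `A` by switching about the
vertex set `X`: entry `(i,j)` is multiplied by `-1` exactly when one of `i, j` lies in `X`. -/
def switchMatrix {m : Type*} [DecidableEq m] (X : Finset m) (A : Matrix m m ℝ) :
    Matrix m m ℝ :=
  fun i j => (if i ∈ X then (-1 : ℝ) else 1) * A i j * (if j ∈ X then (-1 : ℝ) else 1)

/-- The `k`-th standard basis vector of `ℝ^n` (with `ℕ`-valued index `k`). -/
def stdVec (n : ℕ) (k : ℕ) : Fin n → ℝ := fun j => if (j : ℕ) = k then 1 else 0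

lemma stdVec_eq {n : ℕ} (a : ℕ) (ha : a < n) :
    stdVec n a = fun m : Fin n => if m = ⟨a, ha⟩ then (1:ℝ) else 0 := by
  funext m; simp [stdVec, Fin.ext_iff]

lemma sum_stdVec {n : ℕ} (a : ℕ) (ha : a < n) : ∑ j, stdVec n a j = 1 := by
  rw [stdVec_eq a ha]
  simp

lemma mulVec_std2 {n : ℕ} (M : Matrix (Fin n) (Fin n) ℝ) (a b : Fin n) :
    M.mulVec (stdVec n (a : ℕ) + stdVec n (b : ℕ)) = fun j => M j a + M j b := by
  funext j
  have h1 : stdVec n (a:ℕ) = fun m : Fin n => if m = a then (1:ℝ) else 0 := by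
    rw [stdVec_eq (a:ℕ) a.isLt]
  have h2 : stdVec n (b:ℕ) = fun m : Fin n => if m = b then (1:ℝ) else 0 := by
    rw [stdVec_eq (b:ℕ) b.isLt]
  simp [Matrix.mulVec, dotProduct, h1, h2, mul_add, Finset.sum_add_distrib]

lemma key {n r t : ℕ} (G : SimpleGraph (Fin n)) [DecidableRel G.Adj]
    (hnbr : ∀ i j : Fin n, (i : ℕ) < r → (j : ℕ) < r →
      ({u | G.Adj i u ∨ u = i} : Set (Fin n)) = {u | G.Adj j u ∨ u = j})
    (B : Matrix (Fin n) (Fin n) ℝ)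
    (hB : B = switchMatrix (Finset.univ.filter (fun v : Fin n => (v : ℕ) < t)) (G.adjMatrix ℝ))
    (a b : Fin n) (hat : (a:ℕ) < t) (htb : t ≤ (b:ℕ)) (har : (a:ℕ) < r) (hbr : (b:ℕ) < r) :
    B.mulVec (stdVec n (a:ℕ) + stdVec n (b:ℕ)) = (-1 : ℝ) • (stdVec n (a:ℕ) + stdVec n (b:ℕ)) := by
  have hvab : (a:ℕ) ≠ (b:ℕ) := by omega
  have hab : a ≠ b := fun h => hvab (by rw [h])
  have hadj : G.Adj a b := by
    have h := hnbr b a hbr har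
    have hm : a ∈ ({u | G.Adj a u ∨ u = a} : Set (Fin n)) := Or.inr rfl
    rw [← h] at hm
    rcases hm with h' | h'
    · exact h'.symm
    · exact absurd h' hab
  have hsame : ∀ u : Fin n, u ≠ a → u ≠ b → (G.Adj u a ↔ G.Adj u b) := by
    intro u hua hub
    have h := hnbr a b har hbr
    have : (G.Adj a u ∨ u = a) ↔ (G.Adj b u ∨ u = b) := by
      have := Set.ext_iff.mp h u
      simpa using this
    constructor
    · intro hu
      rcases this.mp (Or.inl hu.symm) with h' | h'
      · exact h'.symm
      · exact absurd h' hub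
    · intro hu
      rcases this.mpr (Or.inl hu.symm) with h' | h'
      · exact h'.symm
      · exact absurd h' hua
  subst hB
  rw [mulVec_std2]
  funext j
  simp only [switchMatrix, SimpleGraph.adjMatrix_apply, Finset.mem_filter, Finset.mem_univ,
    true_and, Pi.add_apply, Pi.smul_apply, smul_eq_mul, stdVec]
  have hbt : ¬ ((b:ℕ) < t) := by omega
  rcases eq_or_ne j a with rfl | hja
  · simp [hat, hbt, hvab, G.irrefl, hadj]
  · rcases eq_or_ne j b with rfl | hjb
    · simp [hat, hbt, hvab.symm, G.irrefl, hadj.symm]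
    · have h1 : (j:ℕ) ≠ (a:ℕ) := fun h => hja (Fin.ext h)
      have h2 : (j:ℕ) ≠ (b:ℕ) := fun h => hjb (Fin.ext h)
      have h3 : G.Adj j a ↔ G.Adj j b := hsame j hja hjb
      by_cases hja' : G.Adj j a
      · simp [hja', h3.mp hja', hat, hbt, h1, h2]
      · have hjb' : ¬ G.Adj j b := fun h => hja' (h3.mpr h)
        simp [hja', hjb', hat, hbt, h1, h2]

/-- If `v_1, …, v_r` (here the vertices `0, …, r-1` of `Fin n`) all have the
same closed neighbourhood in `G`, and `G^σ` is obtained from `G` by switching about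
`{v_1, …, v_t}` with `1 ≤ t ≤ r - 1`, then the `r - 1` vectors `e_i + e_{t+1}` (`1 ≤ i ≤ t`)
and `e_1 + e_{t+i}` (`2 ≤ i ≤ r - t`) are linearly independent main eigenvectors of
`A(G^σ)` for the eigenvalue `-1`; in particular `-1` is a main eigenvalue of multiplicity
at least `r - 1`. -/
theorem stmt0 {n r t : ℕ} (hr : 2 ≤ r) (hrn : r ≤ n) (ht1 : 1 ≤ t) (htr : t ≤ r - 1)
    (G : SimpleGraph (Fin n)) [DecidableRel G.Adj]
    (hnbr : ∀ i j : Fin n, (i : ℕ) < r → (j : ℕ) < r →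
      ({u | G.Adj i u ∨ u = i} : Set (Fin n)) = {u | G.Adj j u ∨ u = j})
    (B : Matrix (Fin n) (Fin n) ℝ)
    (hB : B = switchMatrix (Finset.univ.filter (fun v : Fin n => (v : ℕ) < t))
      (G.adjMatrix ℝ))
    (w : Fin (r - 1) → (Fin n → ℝ))
    (hw : ∀ k : Fin (r - 1), w k = if (k : ℕ) < t then stdVec n k + stdVec n t
      else stdVec n 0 + stdVec n ((k : ℕ) + 1)) :
    LinearIndependent ℝ w ∧
    (∀ k, B.mulVec (w k) = (-1 : ℝ) • w k) ∧
    (∀ k, ∑ j, w k j ≠ 0) ∧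
    r - 1 ≤ Module.finrank ℝ (Module.End.eigenspace (Matrix.toLin' B) (-1)) := by
  have hwval : ∀ (i : Fin (r-1)) (j : Fin n), w i j =
      (if (i:ℕ) < t then ((if (j:ℕ) = (i:ℕ) then (1:ℝ) else 0) + (if (j:ℕ) = t then 1 else 0))
       else ((if (j:ℕ) = 0 then (1:ℝ) else 0) + (if (j:ℕ) = (i:ℕ)+1 then 1 else 0))) := by
    intro i j
    rw [hw i]
    by_cases hit : (i:ℕ) < t <;> simp [hit, stdVec]
  -- eigenvector property
  have heig : ∀ k, B.mulVec (w k) = (-1 : ℝ) • w k := by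
    intro k
    have hk' : (k:ℕ) < r - 1 := k.isLt
    rw [hw k]
    by_cases hk : (k:ℕ) < t
    · rw [if_pos hk]
      exact key G hnbr B hB ⟨(k:ℕ), by omega⟩ ⟨t, by omega⟩ hk (le_refl t) (by simp only [Fin.val_mk]; omega) (by simp only [Fin.val_mk]; omega)
    · rw [if_neg hk]
      exact key G hnbr B hB ⟨0, by omega⟩ ⟨(k:ℕ)+1, by omega⟩ (by simp only [Fin.val_mk]; omega)
        (by simp only [Fin.val_mk]; omega) (by simp only [Fin.val_mk]; omega) (by simp only [Fin.val_mk]; omega)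
  -- linear independence
  have hli : LinearIndependent ℝ w := by
    rw [Fintype.linearIndependent_iff]
    intro g hg
    have main : ∀ (k : Fin (r-1)) (j : Fin n),
        (∀ i : Fin (r-1), g i * w i j = if i = k then g i else 0) → g k = 0 := by
      intro k j hterm
      have h := congrFun hg j
      rw [Finset.sum_apply] at h
      simp only [Pi.smul_apply, smul_eq_mul] at h
      rw [Finset.sum_congr rfl (fun i _ => hterm i)] at h
      rw [Finset.sum_ite_eq'] at h
      simpa using h
    have hzero : ∀ k : Fin (r-1), t ≤ (k:ℕ) → g k = 0 := by
      intro k hk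
      have hk' : (k:ℕ) < r - 1 := k.isLt
      apply main k ⟨(k:ℕ)+1, by omega⟩
      intro i
      have hi' : (i:ℕ) < r - 1 := i.isLt
      rw [hwval i ⟨(k:ℕ)+1, by omega⟩]
      simp only [Fin.ext_iff, Fin.val_mk]
      split_ifs <;> first | ring1 | (exfalso; first | assumption | omega)
    intro k
    have hk' : (k:ℕ) < r - 1 := k.isLt
    by_cases hk : t ≤ (k:ℕ)
    · exact hzero k hk
    · push_neg at hk
      by_cases hk0 : (k:ℕ) = 0
      · apply main k ⟨0, by omega⟩
        intro i
        have hi' : (i:ℕ) < r - 1 := i.isLt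
        rw [hwval i ⟨0, by omega⟩]
        simp only [Fin.ext_iff, Fin.val_mk]
        split_ifs <;> first | ring1 | (exfalso; first | assumption | omega) | (rw [hzero i (by omega)]; ring1)
      · apply main k ⟨(k:ℕ), by omega⟩
        intro i
        have hi' : (i:ℕ) < r - 1 := i.isLt
        rw [hwval i ⟨(k:ℕ), by omega⟩]
        simp only [Fin.ext_iff, Fin.val_mk]
        split_ifs <;> first | ring1 | (exfalso; first | assumption | omega)
  -- sums
  have hsum : ∀ k, ∑ j, w k j = 2 := by
    intro k
    have hk' : (k:ℕ) < r - 1 := k.isLt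
    rw [hw k]
    by_cases hk : (k:ℕ) < t
    · rw [if_pos hk]
      simp only [Pi.add_apply]
      rw [Finset.sum_add_distrib, sum_stdVec _ (by omega), sum_stdVec _ (by omega)]
      norm_num
    · rw [if_neg hk]
      simp only [Pi.add_apply]
      rw [Finset.sum_add_distrib, sum_stdVec _ (by omega), sum_stdVec _ (by omega)]
      norm_num
  refine ⟨hli, heig, fun k => by rw [hsum k]; norm_num, ?_⟩
  -- finrank bound
  have hmem : ∀ k, w k ∈ Module.End.eigenspace (Matrix.toLin' B) (-1) := by
    intro k
    rw [Module.End.mem_eigenspace_iff, Matrix.toLin'_apply, heig k]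
  have hli' : LinearIndependent ℝ
      (fun k => (⟨w k, hmem k⟩ : Module.End.eigenspace (Matrix.toLin' B) (-1))) := by
    apply LinearIndependent.of_comp (Submodule.subtype _)
    exact hli
  calc r - 1 = Fintype.card (Fin (r-1)) := by simp
    _ ≤ _ := hli'.fintype_card_le_finrank
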